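/- arXiv:1404.4918 — 3 statements merged into one kernel-verified Lean document; each statement's English description precedes it below -/
import Mathlib

section
/- (Hasse–Minkowski for conics) Let a, b ∈ ℚˣ. The equation ax² + by² = 1 has a solution x, y ∈ ℚ if and only if it has a solution in ℝ and in ℚ_p for every prime p. -/
section FieldLemmas
variable {K : Type*} [Field K]

lemma solv_swap {A B : K} :
    (∃ x y : K, A * x ^ 2 + B * y ^ 2 = 1) ↔ (∃ x y : K, B * x ^ 2 + A * y ^ 2 = 1) := by
  constructor <;> rintro ⟨x, y, h⟩ <;> exact ⟨y, x, by linear_combination h⟩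

lemma solv_scale {A B d : K} (hd : d ≠ 0) :
    (∃ x y : K, A * x ^ 2 + B * y ^ 2 = 1) ↔
    (∃ x y : K, A * x ^ 2 + (B * d ^ 2) * y ^ 2 = 1) := by
  constructor
  · rintro ⟨x, y, h⟩
    refine ⟨x, y / d, ?_⟩
    field_simp
    linear_combination h
  · rintro ⟨x, y, h⟩
    exact ⟨x, d * y, by linear_combination h⟩

lemma solv_iff_norm {A B : K} (hA : A ≠ 0) (hB : B ≠ 0) (h2 : (2 : K) ≠ 0) :
    (∃ x y : K, A * x ^ 2 + B * y ^ 2 = 1) ↔ (∃ u v : K, u ^ 2 - A * v ^ 2 = B) := by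
  constructor
  · rintro ⟨x, y, h⟩
    rcases eq_or_ne y 0 with rfl | hy
    · have hx : x ≠ 0 := by rintro rfl; simp at h
      have hA' : A * x ^ 2 = 1 := by linear_combination h
      refine ⟨(1 + B) / 2, x * ((B - 1) / 2), ?_⟩
      field_simp
      linear_combination (-(B - 1) ^ 2) * hA'
    · refine ⟨1 / y, x / y, ?_⟩
      field_simp
      linear_combination -h
  · rintro ⟨u, v, h⟩
    rcases eq_or_ne u 0 with rfl | hu
    · have hv : v ≠ 0 := by
        rintro rfl; simp at h; exact hB h.symm
      have hBv : B = -(A * v ^ 2) := by linear_combination -h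
      subst hBv
      refine ⟨(1 + 1/A) / 2, (1/A - 1) / (2 * v), ?_⟩
      field_simp
      ring
    · refine ⟨v / u, 1 / u, ?_⟩
      field_simp
      linear_combination -h

lemma norm_step {A B B' t : K} (hB : B ≠ 0) (ht : B * B' = t ^ 2 - A)
    (h : ∃ u v : K, u ^ 2 - A * v ^ 2 = B) : ∃ u v : K, u ^ 2 - A * v ^ 2 = B' := by
  rcases h with ⟨u, v, h⟩
  refine ⟨(t * u + A * v) / B, (t * v + u) / B, ?_⟩
  field_simp
  linear_combination (t ^ 2 - A) * h - B * ht

lemma solv_descent {A B B' t : K} (hA : A ≠ 0) (hB : B ≠ 0) (hB' : B' ≠ 0)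
    (h2 : (2 : K) ≠ 0) (ht : B * B' = t ^ 2 - A) :
    (∃ x y : K, A * x ^ 2 + B * y ^ 2 = 1) ↔ (∃ x y : K, A * x ^ 2 + B' * y ^ 2 = 1) := by
  rw [solv_iff_norm hA hB h2, solv_iff_norm hA hB' h2]
  constructor
  · exact norm_step hB ht
  · exact norm_step hB' (by rw [mul_comm] at ht; exact ht)

end FieldLemmas

section CRT

lemma sq_crt (a : ℤ) : ∀ n : ℕ, Squarefree n →
    (∀ p : ℕ, p.Prime → p ∣ n → IsSquare (a : ZMod p)) → IsSquare (a : ZMod n) := by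
  intro n
  induction n using Nat.strong_induction_on with
  | _ n ih =>
    intro hsf hp
    rcases eq_or_ne n 1 with rfl | h1
    · exact ⟨0, Subsingleton.elim _ _⟩
    have hn0 : n ≠ 0 := by rintro rfl; exact not_squarefree_zero hsf
    set p := n.minFac with hpdef
    have hpp : p.Prime := Nat.minFac_prime h1
    have hpn : p ∣ n := Nat.minFac_dvd n
    set m := n / p with hmdef
    have hpm : p * m = n := Nat.mul_div_cancel' hpn
    have hmdvd : m ∣ n := ⟨p, by rw [← hpm]; ring⟩
    rcases eq_or_ne m 1 with hm1 | hm1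
    · have hnp : n = p := by rw [← hpm, hm1, mul_one]
      rw [hnp]; exact hp p hpp hpn
    · have hmn : m < n := Nat.div_lt_self (Nat.pos_of_ne_zero hn0) hpp.one_lt
      have hsfm : Squarefree m := hsf.squarefree_of_dvd hmdvd
      have hcop : p.Coprime m := by
        rw [Nat.Prime.coprime_iff_not_dvd hpp]
        intro hdvd
        exact hpp.not_isUnit (hsf p (by rw [← hpm]; exact mul_dvd_mul_left p hdvd))
      obtain ⟨r, hr⟩ := hp p hpp hpn
      obtain ⟨s, hs⟩ := ih m hmn hsfm (fun q hq hqm => hp q hq (hqm.trans hmdvd))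
      let e := ZMod.chineseRemainder hcop
      refine hpm ▸ ⟨e.symm (r, s), ?_⟩
      apply e.injective
      rw [map_mul, RingEquiv.apply_symm_apply, map_intCast]
      refine Prod.ext ?_ ?_
      · simpa using hr
      · simpa using hs

lemma exists_centered_sqrt (a b : ℤ) (hb : Squarefree b)
    (h : ∀ p : ℕ, p.Prime → (p : ℤ) ∣ b → IsSquare (a : ZMod p)) :
    ∃ t : ℤ, b ∣ t ^ 2 - a ∧ 2 * |t| ≤ |b| := by
  have hb2 : b ≠ 0 := by rintro rfl; exact not_squarefree_zero hb
  set n := b.natAbs with hndef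
  have hn0 : n ≠ 0 := Int.natAbs_ne_zero.mpr hb2
  haveI : NeZero n := ⟨hn0⟩
  have hn : Squarefree n := Int.squarefree_natAbs.mpr hb
  have hsq : IsSquare (a : ZMod n) := by
    refine sq_crt a n hn (fun p hpp hpn => h p hpp ?_)
    exact Int.dvd_natAbs.mp (Int.natCast_dvd_natCast.mpr hpn)
  obtain ⟨r, hr⟩ := hsq
  set s : ℤ := (r.val : ℤ) with hsdef
  have hsr : ((s : ℤ) : ZMod n) = r := by
    rw [hsdef, Int.cast_natCast]
    exact ZMod.natCast_rightInverse r
  have hs : b ∣ s ^ 2 - a := by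
    refine Int.natAbs_dvd.mp ((ZMod.intCast_zmod_eq_zero_iff_dvd _ _).mp ?_)
    push_cast
    rw [hsr, hr]; ring
  -- center
  set B : ℤ := |b| with hBdef
  have hB0 : 0 < B := abs_pos.mpr hb2
  set t0 : ℤ := s % B with ht0def
  have ht0l : 0 ≤ t0 := Int.emod_nonneg s (ne_of_gt hB0)
  have ht0u : t0 < B := Int.emod_lt_of_pos s hB0
  have hBs : B ∣ s - t0 := by
    rw [ht0def, Int.emod_def]; exact ⟨s / B, by ring⟩
  have hbs : b ∣ s - t0 := (abs_dvd b _).mp hBs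
  have key : ∀ t : ℤ, b ∣ t - s → b ∣ t ^ 2 - a := by
    intro t hts
    have hdec : t ^ 2 - a = (t - s) * (t + s) + (s ^ 2 - a) := by ring
    rw [hdec]
    exact dvd_add (hts.mul_right _) hs
  have hbB : b ∣ B := by
    rcases abs_choice b with hc | hc
    · rw [hBdef, hc]
    · rw [hBdef, hc]; exact dvd_neg.mpr dvd_rfl
  by_cases hcase : 2 * t0 ≤ B
  · refine ⟨t0, key t0 (by rw [show t0 - s = -(s - t0) by ring]; exact dvd_neg.mpr hbs), ?_⟩
    rw [abs_of_nonneg ht0l]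
    exact hcase
  · refine ⟨t0 - B, key (t0 - B) ?_, ?_⟩
    · rw [show t0 - B - s = -(s - t0) - B by ring]
      exact dvd_sub (dvd_neg.mpr hbs) hbB
    · rw [abs_of_neg (by omega : t0 - B < 0)]
      omega

end CRT

section LocalLemma
variable {p : ℕ} [hp : Fact p.Prime]

lemma lift_eq (a b : ℤ) (U V W : ℤ_[p])
    (heq : (a : ℚ_[p]) * (U : ℚ_[p]) ^ 2 + (b : ℚ_[p]) * (V : ℚ_[p]) ^ 2 = (W : ℚ_[p]) ^ 2) :
    (a : ℤ_[p]) * U ^ 2 + (b : ℤ_[p]) * V ^ 2 = W ^ 2 := by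
  apply Subtype.coe_injective
  push_cast
  exact heq

lemma modp_of_eq (a b : ℤ) (hpb : (p : ℤ) ∣ b) (U V W : ℤ_[p])
    (heq : (a : ℚ_[p]) * (U : ℚ_[p]) ^ 2 + (b : ℚ_[p]) * (V : ℚ_[p]) ^ 2 = (W : ℚ_[p]) ^ 2) :
    (a : ZMod p) * (PadicInt.toZMod U) ^ 2 = (PadicInt.toZMod W) ^ 2 := by
  have hZ := lift_eq a b U V W heq
  have := congrArg PadicInt.toZMod hZ
  rw [map_add, map_mul, map_mul, map_pow, map_pow, map_pow, map_intCast, map_intCast] at this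
  rwa [(ZMod.intCast_zmod_eq_zero_iff_dvd b p).mpr hpb, zero_mul, add_zero] at this

lemma norm_le_inv_of_norm_lt (z : ℤ_[p]) (h : ‖z‖ < 1) : ‖z‖ ≤ (p : ℝ)⁻¹ := by
  obtain ⟨c, rfl⟩ := (PadicInt.norm_lt_one_iff_dvd z).mp h
  rw [norm_mul, PadicInt.norm_p]
  exact mul_le_of_le_one_right (by positivity) (PadicInt.norm_le_one c)

lemma local_square (a b : ℤ) (hb : Squarefree b) (hpb : (p : ℤ) ∣ b)
    (h : ∃ x y : ℚ_[p], (a : ℚ_[p]) * x ^ 2 + (b : ℚ_[p]) * y ^ 2 = 1) :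
    IsSquare ((a : ZMod p)) := by
  obtain ⟨x, y, hxy⟩ := h
  by_cases hx1 : ‖x‖ ≤ 1 ∧ ‖y‖ ≤ 1
  · -- Case A: everything integral
    have key := modp_of_eq a b hpb ⟨x, hx1.1⟩ ⟨y, hx1.2⟩ 1 (by push_cast; exact hxy)
    rw [map_one, one_pow] at key
    set X := PadicInt.toZMod (⟨x, hx1.1⟩ : ℤ_[p]) with hXdef
    have hX : X ≠ 0 := by rintro h0; rw [h0] at key; simp at key
    exact ⟨X⁻¹, by field_simp; linear_combination key⟩
  · push_neg at hx1
    rcases le_or_gt ‖y‖ ‖x‖ with hyx | hyx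
    · -- Case B1: ‖x‖ maximal and > 1
      have hxg : 1 < ‖x‖ := by
        by_contra hc; push_neg at hc
        exact absurd (hx1 hc) (not_lt.mpr (le_trans hyx hc))
      have hx0 : x ≠ 0 := by rintro rfl; simp at hxg; linarith
      have hv : ‖y / x‖ ≤ 1 := by
        rw [norm_div]; exact div_le_one_of_le₀ hyx (norm_nonneg _)
      have hw : ‖1 / x‖ ≤ 1 := by
        rw [norm_div, norm_one]; exact le_of_lt ((div_lt_one (by linarith)).mpr hxg)
      have key := modp_of_eq a b hpb 1 ⟨y / x, hv⟩ ⟨1 / x, hw⟩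
        (by push_cast; field_simp; linear_combination hxy)
      rw [map_one, one_pow, mul_one] at key
      exact ⟨_, by rw [key]; ring⟩
    · -- Case B2: ‖y‖ > max(1, ‖x‖): contradiction with b squarefree
      exfalso
      have hyg : 1 < ‖y‖ := by
        by_contra hc; push_neg at hc
        exact absurd (hx1 (le_of_lt (lt_of_lt_of_le hyx hc))) (not_lt.mpr hc)
      have hy0 : y ≠ 0 := by rintro rfl; simp at hyg; linarith
      have hu : ‖x / y‖ < 1 := by
        rw [norm_div]; exact (div_lt_one (by linarith)).mpr hyx
      have hw : ‖1 / y‖ < 1 := by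
        rw [norm_div, norm_one]; exact (div_lt_one (by linarith)).mpr hyg
      set U : ℤ_[p] := ⟨x / y, le_of_lt hu⟩
      set W : ℤ_[p] := ⟨1 / y, le_of_lt hw⟩
      have hZ : (a : ℤ_[p]) * U ^ 2 + (b : ℤ_[p]) * 1 ^ 2 = W ^ 2 := by
        refine lift_eq a b U 1 W ?_
        push_cast
        show (a : ℚ_[p]) * (x / y) ^ 2 + (b : ℚ_[p]) * 1 ^ 2 = (1 / y) ^ 2
        field_simp
        linear_combination hxy
      have hbeq : (b : ℤ_[p]) = W ^ 2 + -((a : ℤ_[p]) * U ^ 2) := by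
        linear_combination hZ
      have hUn : ‖U‖ ≤ (p : ℝ)⁻¹ := norm_le_inv_of_norm_lt U hu
      have hWn : ‖W‖ ≤ (p : ℝ)⁻¹ := norm_le_inv_of_norm_lt W hw
      have hpinv : (0 : ℝ) ≤ (p : ℝ)⁻¹ := by positivity
      have hbn : ‖(b : ℤ_[p])‖ ≤ (p : ℝ)⁻¹ * (p : ℝ)⁻¹ := by
        rw [hbeq]
        refine le_trans (PadicInt.nonarchimedean _ _) (max_le ?_ ?_)
        · rw [norm_pow]
          calc ‖W‖ ^ 2 ≤ ((p : ℝ)⁻¹) ^ 2 := by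
                exact pow_le_pow_left₀ (norm_nonneg _) hWn 2
            _ = (p : ℝ)⁻¹ * (p : ℝ)⁻¹ := by ring
        · rw [norm_neg, norm_mul, norm_pow]
          calc ‖(a : ℤ_[p])‖ * ‖U‖ ^ 2 ≤ 1 * ((p : ℝ)⁻¹) ^ 2 := by
                refine mul_le_mul (PadicInt.norm_le_one _)
                  (pow_le_pow_left₀ (norm_nonneg _) hUn 2) (by positivity) zero_le_one
            _ = (p : ℝ)⁻¹ * (p : ℝ)⁻¹ := by ring
      have hdvd : (p ^ 2 : ℤ) ∣ b := by
        rw [← PadicInt.norm_int_le_pow_iff_dvd]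
        calc ‖(b : ℤ_[p])‖ ≤ (p : ℝ)⁻¹ * (p : ℝ)⁻¹ := hbn
          _ = (p : ℝ) ^ (-(2 : ℕ) : ℤ) := by
              rw [zpow_neg, zpow_natCast, pow_two, mul_inv]
      rw [pow_two] at hdvd
      have : IsUnit ((p : ℤ)) := hb p hdvd
      rw [Int.isUnit_iff] at this
      have := hp.1.two_le
      omega

end LocalLemma

section Descent

lemma squarefree_neg_int {c : ℤ} (h : Squarefree c) : Squarefree (-c) :=
  fun x hx => h x (dvd_neg.mp hx)

lemma int_sq_mul_squarefree (n : ℤ) : ∃ c k : ℤ, k ^ 2 * c = n ∧ Squarefree c := by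
  obtain ⟨c0, k0, hck, hsf⟩ := Nat.sq_mul_squarefree n.natAbs
  rcases Int.natAbs_eq n with h | h
  · exact ⟨(c0 : ℤ), (k0 : ℤ), by rw [h]; push_cast [← hck]; ring,
      (Int.squarefree_natCast).mpr hsf⟩
  · refine ⟨-(c0 : ℤ), (k0 : ℤ), by rw [h]; push_cast [← hck]; ring, ?_⟩
    exact squarefree_neg_int (Int.squarefree_natCast.mpr hsf)

lemma descent_main : ∀ N : ℕ, ∀ a b : ℤ, Squarefree a → Squarefree b →
    a.natAbs ≤ b.natAbs → a.natAbs + b.natAbs ≤ N →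
    (∃ x y : ℝ, (a : ℝ) * x ^ 2 + (b : ℝ) * y ^ 2 = 1) →
    (∀ (p : ℕ) [Fact p.Prime], ∃ x y : ℚ_[p], (a : ℚ_[p]) * x ^ 2 + (b : ℚ_[p]) * y ^ 2 = 1) →
    ∃ x y : ℚ, (a : ℚ) * x ^ 2 + (b : ℚ) * y ^ 2 = 1 := by
  intro N
  induction N using Nat.strong_induction_on with
  | _ N ih =>
    intro a b hsa hsb hab hN hR hQp
    have ha0 : a ≠ 0 := hsa.ne_zero
    have hb0 : b ≠ 0 := hsb.ne_zero
    -- trivial cases a = 1 or b = 1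
    rcases eq_or_ne a 1 with rfl | ha1
    · exact ⟨1, 0, by norm_num⟩
    rcases eq_or_ne b 1 with rfl | hb1
    · exact ⟨0, 1, by norm_num⟩
    by_cases hbsmall : b.natAbs ≤ 1
    · -- base case : a = -1, b = -1
      have hbu : b = 1 ∨ b = -1 :=
        Int.isUnit_iff.mp (Int.isUnit_iff_natAbs_eq.mpr (by omega))
      have hau : a = 1 ∨ a = -1 := by
        have : a.natAbs = 1 := by
          have := Int.natAbs_ne_zero.mpr ha0; omega
        exact Int.isUnit_iff.mp (Int.isUnit_iff_natAbs_eq.mpr this)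
      have hbm : b = -1 := by tauto
      have ham : a = -1 := by tauto
      subst hbm; subst ham
      exfalso
      obtain ⟨x, y, hxy⟩ := hR
      push_cast at hxy
      nlinarith [sq_nonneg x, sq_nonneg y]
    · -- descent step, |b| ≥ 2
      push_neg at hbsmall
      have hsqmod : ∀ p : ℕ, p.Prime → (p : ℤ) ∣ b → IsSquare ((a : ZMod p)) := by
        intro p hpp hpb
        haveI : Fact p.Prime := ⟨hpp⟩
        exact local_square a b hsb hpb (hQp p)
      obtain ⟨t, ht1, ht2⟩ := exists_centered_sqrt a b hsb hsqmod
      rcases eq_or_ne (t ^ 2 - a) 0 with hta | hta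
      · -- a is a perfect square
        have hat : a = t ^ 2 := by omega
        have ht0 : t ≠ 0 := by rintro rfl; simp at hat; exact ha0 hat
        refine ⟨1 / (t : ℚ), 0, ?_⟩
        have htQ : (t : ℚ) ≠ 0 := Int.cast_ne_zero.mpr ht0
        rw [hat]
        push_cast
        field_simp
        simp
      · -- proper descent
        set b' : ℤ := (t ^ 2 - a) / b with hb'def
        have hbb' : b * b' = t ^ 2 - a := Int.mul_ediv_cancel' ht1
        have hb'0 : b' ≠ 0 := by
          rintro h0; rw [h0, mul_zero] at hbb'; exact hta hbb'.symm
        -- bound |b'| < |b|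
        have habs : |b| * |b'| ≤ |t| * |t| + |a| := by
          rw [← abs_mul, hbb']
          calc |t ^ 2 - a| ≤ |t ^ 2| + |a| := abs_sub _ _
            _ = |t| * |t| + |a| := by rw [pow_two, abs_mul]
        have hanb : |a| ≤ |b| := by
          rw [Int.abs_eq_natAbs, Int.abs_eq_natAbs]; exact_mod_cast hab
        have hb2 : 2 ≤ |b| := by
          rw [Int.abs_eq_natAbs]; exact_mod_cast hbsmall
        have hb'1 : 1 ≤ |b'| := by
          rcases abs_pos.mpr hb'0 with h; omega
        have hblt : |b'| < |b| := by
          by_contra hc; push_neg at hc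
          nlinarith [habs, ht2, hanb, hb2, hc, abs_nonneg t]
        -- extract squarefree part of b'
        obtain ⟨c, k, hck, hsc⟩ := int_sq_mul_squarefree b'
        have hk0 : k ≠ 0 := by
          rintro rfl; rw [zero_pow (by norm_num), zero_mul] at hck; exact hb'0 hck.symm
        have hc0 : c ≠ 0 := hsc.ne_zero
        have hcb' : |c| ≤ |b'| := by
          rw [← hck, abs_mul, abs_pow]
          have hk1 : (1 : ℤ) ≤ |k| := Int.one_le_abs hk0
          have h1 : (1 : ℤ) ≤ |k| ^ 2 := by nlinarith
          calc |c| = 1 * |c| := (one_mul _).symm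
            _ ≤ |k| ^ 2 * |c| := mul_le_mul_of_nonneg_right h1 (abs_nonneg c)
        have hclt : |c| < |b| := lt_of_le_of_lt hcb' hblt
        -- the transfer principle over any characteristic-zero field
        have transfer : ∀ (K : Type) [Field K] [CharZero K],
            ((∃ x y : K, (a : K) * x ^ 2 + (b : K) * y ^ 2 = 1) ↔
             (∃ x y : K, (a : K) * x ^ 2 + (c : K) * y ^ 2 = 1)) := by
          intro K _ _
          have haK : (a : K) ≠ 0 := Int.cast_ne_zero.mpr ha0
          have hbK : (b : K) ≠ 0 := Int.cast_ne_zero.mpr hb0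
          have hbK' : (b' : K) ≠ 0 := Int.cast_ne_zero.mpr hb'0
          have hkK : (k : K) ≠ 0 := Int.cast_ne_zero.mpr hk0
          have h2K : (2 : K) ≠ 0 := two_ne_zero
          have htK : (b : K) * (b' : K) = (t : K) ^ 2 - (a : K) := by
            exact_mod_cast congrArg (Int.cast : ℤ → K) hbb'
          have hsc' : (b' : K) = (c : K) * (k : K) ^ 2 := by
            exact_mod_cast congrArg (Int.cast : ℤ → K) (by rw [← hck]; ring : b' = c * k ^ 2)
          have e1 := solv_descent haK hbK hbK' h2K htK
          have e2 := solv_scale (A := (a : K)) (B := (c : K)) hkK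
          rw [← hsc'] at e2
          exact e1.trans e2.symm
        -- prepare hypotheses for the recursive call
        have hRc : ∃ x y : ℝ, (a : ℝ) * x ^ 2 + (c : ℝ) * y ^ 2 = 1 := (transfer ℝ).mp hR
        have hQpc : ∀ (p : ℕ) [Fact p.Prime],
            ∃ x y : ℚ_[p], (a : ℚ_[p]) * x ^ 2 + (c : ℚ_[p]) * y ^ 2 = 1 := by
          intro p _
          exact (transfer ℚ_[p]).mp (hQp p)
        have hmeas : a.natAbs + c.natAbs < N := by
          have h1 : c.natAbs < b.natAbs := by
            rw [Int.abs_eq_natAbs, Int.abs_eq_natAbs] at hclt; exact_mod_cast hclt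
          omega
        refine (transfer ℚ).mpr ?_
        rcases le_total a.natAbs c.natAbs with hord | hord
        · exact ih (a.natAbs + c.natAbs) hmeas a c hsa hsc hord le_rfl hRc hQpc
        · have := ih (a.natAbs + c.natAbs) hmeas c a hsc hsa hord (by omega)
            (solv_swap.mp hRc) (fun p _ => solv_swap.mp (hQpc p))
          exact solv_swap.mp this

end Descent

section Final

lemma rat_reduce (a : ℚ) (ha : a ≠ 0) :
    ∃ (a₀ : ℤ) (r : ℚ), Squarefree a₀ ∧ r ≠ 0 ∧ a = (a₀ : ℚ) * r ^ 2 := by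
  obtain ⟨c, k, hck, hsf⟩ := int_sq_mul_squarefree (a.num * a.den)
  have hnum : a.num ≠ 0 := Rat.num_ne_zero.mpr ha
  have hden : (a.den : ℤ) ≠ 0 := by exact_mod_cast a.den_nz
  have hk0 : k ≠ 0 := by
    rintro rfl
    rw [zero_pow (by norm_num), zero_mul] at hck
    exact mul_ne_zero hnum hden hck.symm
  refine ⟨c, (k : ℚ) / (a.den : ℚ), hsf, ?_, ?_⟩
  · exact div_ne_zero (by exact_mod_cast hk0) (by exact_mod_cast hden)
  · have hq : ((k : ℚ)) ^ 2 * (c : ℚ) = (a.num : ℚ) * (a.den : ℚ) := by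
      exact_mod_cast congrArg (Int.cast : ℤ → ℚ) hck
    have hden' : ((a.den : ℚ)) ≠ 0 := by exact_mod_cast hden
    rw [eq_comm, div_pow]
    field_simp
    rw [show ((a.den : ℚ)) ^ 2 = (a.den : ℚ) * (a.den : ℚ) by ring] at *
    have : a * ((a.den : ℚ) * (a.den : ℚ)) = (a.num : ℚ) * (a.den : ℚ) := by
      rw [← mul_assoc]
      congr 1
      exact_mod_cast Rat.mul_den_eq_num a
    linear_combination hq - this

lemma solv_scale_both {K : Type*} [Field K] {A B r s : K} (hr : r ≠ 0) (hs : s ≠ 0) :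
    (∃ x y : K, A * x ^ 2 + B * y ^ 2 = 1) ↔
    (∃ x y : K, (A * r ^ 2) * x ^ 2 + (B * s ^ 2) * y ^ 2 = 1) := by
  calc (∃ x y : K, A * x ^ 2 + B * y ^ 2 = 1)
      ↔ (∃ x y : K, A * x ^ 2 + (B * s ^ 2) * y ^ 2 = 1) := solv_scale hs
    _ ↔ (∃ x y : K, (B * s ^ 2) * x ^ 2 + A * y ^ 2 = 1) := solv_swap
    _ ↔ (∃ x y : K, (B * s ^ 2) * x ^ 2 + (A * r ^ 2) * y ^ 2 = 1) := solv_scale hr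
    _ ↔ _ := solv_swap

/-- Hasse–Minkowski for conics: for `a, b ∈ ℚˣ`, the equation `a x² + b y² = 1`
has a rational solution iff it has a solution in `ℝ` and in `ℚ_p` for every
prime `p`. -/
theorem hasse_minkowski_conic (a b : ℚ) (ha : a ≠ 0) (hb : b ≠ 0) :
    (∃ x y : ℚ, a * x ^ 2 + b * y ^ 2 = 1) ↔
    ((∃ x y : ℝ, (a : ℝ) * x ^ 2 + (b : ℝ) * y ^ 2 = 1) ∧
     ∀ (p : ℕ) [Fact p.Prime],
       ∃ x y : ℚ_[p], (a : ℚ_[p]) * x ^ 2 + (b : ℚ_[p]) * y ^ 2 = 1) := by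
  constructor
  · rintro ⟨x, y, h⟩
    constructor
    · refine ⟨(x : ℝ), (y : ℝ), ?_⟩
      have := congrArg (fun q : ℚ => (q : ℝ)) h
      push_cast at this
      exact this
    · intro p _
      refine ⟨(x : ℚ_[p]), (y : ℚ_[p]), ?_⟩
      have := congrArg (fun q : ℚ => (q : ℚ_[p])) h
      push_cast at this
      exact this
  · rintro ⟨hR, hQp⟩
    obtain ⟨a₀, r, hsa, hr, hadef⟩ := rat_reduce a ha
    obtain ⟨b₀, s, hsb, hs, hbdef⟩ := rat_reduce b hb
    -- transfer over each char-zero field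
    have transfer : ∀ (K : Type) [Field K] [CharZero K],
        ((∃ x y : K, (a₀ : K) * x ^ 2 + (b₀ : K) * y ^ 2 = 1) ↔
         (∃ x y : K, ((a : ℚ) : K) * x ^ 2 + ((b : ℚ) : K) * y ^ 2 = 1)) := by
      intro K _ _
      have hrK : ((r : ℚ) : K) ≠ 0 := by
        simp only [ne_eq, Rat.cast_eq_zero]; exact hr
      have hsK : ((s : ℚ) : K) ≠ 0 := by
        simp only [ne_eq, Rat.cast_eq_zero]; exact hs
      have haK : ((a : ℚ) : K) = (a₀ : K) * ((r : ℚ) : K) ^ 2 := by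
        rw [hadef]; push_cast; ring
      have hbK : ((b : ℚ) : K) = (b₀ : K) * ((s : ℚ) : K) ^ 2 := by
        rw [hbdef]; push_cast; ring
      rw [haK, hbK]
      exact solv_scale_both hrK hsK
    have hRc := (transfer ℝ).mpr hR
    have hQpc : ∀ (p : ℕ) [Fact p.Prime],
        ∃ x y : ℚ_[p], (a₀ : ℚ_[p]) * x ^ 2 + (b₀ : ℚ_[p]) * y ^ 2 = 1 :=
      fun p _ => (transfer ℚ_[p]).mpr (hQp p)
    refine (transfer ℚ).mp ?_
    rcases le_total a₀.natAbs b₀.natAbs with hord | hord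
    · exact descent_main (a₀.natAbs + b₀.natAbs) a₀ b₀ hsa hsb hord le_rfl hRc hQpc
    · have := descent_main (a₀.natAbs + b₀.natAbs) b₀ a₀ hsb hsa hord (by omega)
        (solv_swap.mp hRc) (fun p _ => solv_swap.mp (hQpc p))
      exact solv_swap.mp this

end Final
end

section
/- (von Staudt–Clausen, integrality form) For every even integer k > 0, the number B_k + ∑_{(l−1) | k} 1/l is an integer, where B_k is the k-th Bernoulli number and the sum runs over the primes l with (l−1) dividing k. -/
open Finset

def vsN (k j : ℕ) : ℤ := ∑ i ∈ range (j + 1), (-1) ^ i * (j.choose i : ℤ) * (i : ℤ) ^ k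

lemma vsN_zero_right (k : ℕ) : vsN k 0 = (0 : ℤ) ^ k := by
  simp [vsN]

lemma vsN_zero_left (j : ℕ) : vsN 0 j = if j = 0 then 1 else 0 := by
  simpa [vsN] using Int.alternating_sum_range_choose (n := j)

lemma vsN_big (m j : ℕ) :
    vsN m j = ∑ i ∈ range (j + 2), (-1) ^ i * (j.choose i : ℤ) * (i : ℤ) ^ m := by
  rw [Finset.sum_range_succ, Nat.choose_succ_self]
  simp [vsN]

lemma vsN_diff (m j : ℕ) :
    ∑ i ∈ range (j + 1), (-1) ^ i * (j.choose i : ℤ) * ((i : ℤ) + 1) ^ m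
      = vsN m j - vsN m (j + 1) := by
  have h1 : vsN m (j + 1)
      = (∑ i ∈ range (j + 1),
          -((-1) ^ i * ((j+1).choose (i+1) : ℤ) * ((i:ℤ)+1) ^ m)) + (0:ℤ)^m := by
    rw [vsN, Finset.sum_range_succ' (fun i => (-1) ^ i * (((j+1).choose i : ℤ)) * (i : ℤ) ^ m)]
    rw [Nat.choose_zero_right]
    push_cast
    congr 1
    · apply Finset.sum_congr rfl; intro i _; ring
    · ring
  have h3 : vsN m j
      = (∑ i ∈ range (j + 1),
          -((-1) ^ i * (j.choose (i+1) : ℤ) * ((i:ℤ)+1) ^ m)) + (0:ℤ)^m := by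
    rw [vsN_big, Finset.sum_range_succ' (fun i => (-1) ^ i * ((j.choose i : ℤ)) * (i : ℤ) ^ m)]
    rw [Nat.choose_zero_right]
    push_cast
    congr 1
    · apply Finset.sum_congr rfl; intro i _; ring
    · ring
  have h2 : ∀ i ∈ range (j+1), (-1:ℤ) ^ i * (j.choose i : ℤ) * ((i:ℤ)+1) ^ m
      = (-((-1) ^ i * (j.choose (i+1) : ℤ) * ((i:ℤ)+1) ^ m))
        - (-((-1) ^ i * (((j+1).choose (i+1) : ℤ)) * ((i:ℤ)+1) ^ m)) := by
    intro i _
    have : ((j+1).choose (i+1) : ℤ) = (j.choose i : ℤ) + (j.choose (i+1) : ℤ) := by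
      exact_mod_cast congrArg (Nat.cast (R := ℤ)) (Nat.choose_succ_succ j i)
    rw [this]; ring
  rw [Finset.sum_congr rfl h2, Finset.sum_sub_distrib]
  rw [h1, h3]; ring

lemma vsN_rec (m j : ℕ) :
    vsN (m + 1) (j + 1) = (j + 1) * (vsN m (j + 1) - vsN m j) := by
  have h1 : vsN (m + 1) (j + 1)
      = (∑ i ∈ range (j + 1),
          -(((j:ℤ)+1) * ((-1) ^ i * (j.choose i : ℤ) * ((i:ℤ)+1) ^ m))) + (0:ℤ)^(m+1) := by
    rw [vsN, Finset.sum_range_succ'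
      (fun i => (-1) ^ i * (((j+1).choose i : ℤ)) * (i : ℤ) ^ (m+1))]
    rw [Nat.choose_zero_right]
    push_cast
    congr 1
    · apply Finset.sum_congr rfl; intro i _
      have : ((j+1).choose (i+1) : ℤ) * ((i:ℤ)+1) = ((j:ℤ)+1) * (j.choose i : ℤ) := by
        exact_mod_cast congrArg (Nat.cast (R := ℤ)) (Nat.add_one_mul_choose_eq j i).symm
      calc (-1:ℤ) ^ (i+1) * ((j+1).choose (i+1) : ℤ) * ((i:ℤ)+1) ^ (m+1)
          = -((-1:ℤ)^i * (((j+1).choose (i+1) : ℤ) * ((i:ℤ)+1)) * ((i:ℤ)+1) ^ m) := by ring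
        _ = -(((j:ℤ)+1) * ((-1) ^ i * (j.choose i : ℤ) * ((i:ℤ)+1) ^ m)) := by rw [this]; ring
  rw [h1, Finset.sum_neg_distrib, ← Finset.mul_sum, vsN_diff]
  ring

lemma vsN_eq_zero : ∀ m j : ℕ, m < j → vsN m j = 0 := by
  intro m
  induction m with
  | zero => intro j hj; rw [vsN_zero_left]; simp; omega
  | succ m ih =>
      intro j hj
      obtain ⟨j', rfl⟩ : ∃ j', j = j' + 1 := ⟨j - 1, by omega⟩
      rw [vsN_rec, ih j' (by omega), ih (j' + 1) (by omega)]
      ring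

lemma vsN_binom (n : ℕ) (x : ℤ) :
    ∑ k ∈ range (n + 1), ((n+1).choose k : ℤ) * x ^ k = (x + 1) ^ (n+1) - x ^ (n+1) := by
  have h := add_pow x 1 (n + 1)
  rw [Finset.sum_range_succ] at h
  simp only [one_pow, mul_one, Nat.choose_self, Nat.cast_one] at h
  have hc : ∑ k ∈ range (n + 1), ((n+1).choose k : ℤ) * x ^ k
      = ∑ k ∈ range (n+1), x ^ k * ((n+1).choose k : ℤ) :=
    Finset.sum_congr rfl fun k _ => mul_comm _ _
  rw [hc]; linarith [h]

lemma vsN_inner (n j : ℕ) :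
    ∑ k ∈ range (n + 1), ((n+1).choose k : ℤ) * vsN k j = -vsN (n+1) (j+1) := by
  have h1 : ∑ k ∈ range (n + 1), ((n+1).choose k : ℤ) * vsN k j
      = ∑ i ∈ range (j+1), ∑ k ∈ range (n+1),
          (-1) ^ i * (j.choose i : ℤ) * (((n+1).choose k : ℤ) * (i:ℤ) ^ k) := by
    unfold vsN
    simp_rw [Finset.mul_sum]
    rw [Finset.sum_comm]
    apply Finset.sum_congr rfl; intro i _
    apply Finset.sum_congr rfl; intro k _
    ring
  rw [h1]
  have h2 : ∀ i ∈ range (j+1), ∑ k ∈ range (n+1),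
      (-1:ℤ) ^ i * (j.choose i : ℤ) * (((n+1).choose k : ℤ) * (i:ℤ) ^ k)
      = (-1) ^ i * (j.choose i : ℤ) * (((i:ℤ)+1) ^ (n+1) - (i:ℤ) ^ (n+1)) := by
    intro i _
    rw [← Finset.mul_sum, vsN_binom]
  rw [Finset.sum_congr rfl h2]
  have h3 : ∑ i ∈ range (j+1),
      (-1:ℤ) ^ i * (j.choose i : ℤ) * (((i:ℤ)+1) ^ (n+1) - (i:ℤ) ^ (n+1))
      = (∑ i ∈ range (j+1), (-1:ℤ) ^ i * (j.choose i : ℤ) * ((i:ℤ)+1) ^ (n+1))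
        - ∑ i ∈ range (j+1), (-1:ℤ) ^ i * (j.choose i : ℤ) * (i:ℤ) ^ (n+1) := by
    rw [← Finset.sum_sub_distrib]
    apply Finset.sum_congr rfl; intro i _; ring
  rw [h3, vsN_diff]
  show vsN (n+1) j - vsN (n+1) (j+1) - vsN (n+1) j = -vsN (n+1) (j+1)
  ring

theorem bernoulli_eq_vsN (n : ℕ) :
    bernoulli n = ∑ j ∈ range (n + 1), (vsN n j : ℚ) / (j + 1) := by
  induction n using Nat.strong_induction_on with
  | _ n ih =>
    match n with
    | 0 => simp [vsN]
    | (n+1) =>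
      -- extend inner sums to a common range
      have hext : ∀ k ≤ n + 1, ∑ j ∈ range (k + 1), (vsN k j : ℚ) / (j + 1)
          = ∑ j ∈ range (n + 2), (vsN k j : ℚ) / (j + 1) := by
        intro k hk
        apply Finset.sum_subset
        · intro x hx; simp at hx ⊢; omega
        · intro x hx1 hx2
          simp only [Finset.mem_range] at hx1 hx2
          rw [vsN_eq_zero k x (by omega)]; simp
      set g : ℕ → ℚ := fun k => ∑ j ∈ range (n + 2), (vsN k j : ℚ) / (j + 1) with hg
      -- the swapped sum is zero
      have hS : ∑ k ∈ range (n + 2), ((n+2).choose k : ℚ) * g k = 0 := by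
        have h1 : ∑ k ∈ range (n + 2), ((n+2).choose k : ℚ) * g k
            = ∑ j ∈ range (n + 2),
                (∑ k ∈ range (n + 2), (((n+2).choose k : ℤ) * vsN k j : ℤ) : ℚ) / (j + 1) := by
          rw [hg]
          simp_rw [Finset.mul_sum]
          rw [Finset.sum_comm]
          apply Finset.sum_congr rfl; intro j _
          push_cast
          rw [Finset.sum_div]
          apply Finset.sum_congr rfl; intro k _
          ring
        rw [h1]
        have h2 : ∀ j ∈ range (n + 2),
            (∑ k ∈ range (n + 2), ((((n+2).choose k : ℤ) * vsN k j : ℤ) : ℚ)) / (j + 1)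
            = -(((vsN (n+1) (j+1) : ℚ)) - ((vsN (n+1) j : ℚ))) := by
          intro j _
          have hinner := vsN_inner (n+1) j
          norm_num at hinner
          have hrec := vsN_rec (n+1) j
          norm_num at hrec
          have hinner' : ∑ k ∈ range (n + 2), ((((n+2).choose k : ℤ) * vsN k j : ℤ) : ℚ)
              = -((vsN (n+2) (j+1) : ℤ) : ℚ) := by
            rw [← Int.cast_sum]
            exact_mod_cast congrArg (Int.cast : ℤ → ℚ) hinner
          have hrec' : ((vsN (n+2) (j+1) : ℤ) : ℚ)
              = ((j:ℚ) + 1) * ((vsN (n+1) (j+1) : ℚ) - (vsN (n+1) j : ℚ)) := by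
            exact_mod_cast congrArg (Int.cast : ℤ → ℚ) hrec
          rw [hinner', hrec']
          have hj : ((j:ℚ)+1) ≠ 0 := by positivity
          field_simp
        rw [Finset.sum_congr rfl h2, Finset.sum_neg_distrib,
          Finset.sum_range_sub (f := fun j => (vsN (n+1) j : ℚ))]
        rw [vsN_eq_zero (n+1) (n+2) (by omega), vsN_zero_right]
        norm_num
      -- compare with the Bernoulli recurrence
      have hB : ∑ k ∈ range (n + 2), ((n+2).choose k : ℚ) * bernoulli k = 0 := by
        rw [sum_bernoulli]; simp
      rw [Finset.sum_range_succ] at hS hB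
      have hk' : ∀ k ∈ range (n+1), ((n+2).choose k : ℚ) * g k
          = ((n+2).choose k : ℚ) * bernoulli k := by
        intro k hk; simp only [Finset.mem_range] at hk
        rw [hg]
        have hihk := ih k (by omega)
        simp only []
        rw [← hext k (by omega), ← hihk]
      rw [Finset.sum_congr rfl hk'] at hS
      have hgb : ((n+2).choose (n+1) : ℚ) * g (n+1) = ((n+2).choose (n+1) : ℚ) * bernoulli (n+1) := by
        linarith [hS, hB]
      have hch : ((n+2).choose (n+1) : ℚ) ≠ 0 :=
        Nat.cast_ne_zero.mpr (Nat.choose_pos (by omega)).ne'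
      have hfin := mul_left_cancel₀ hch hgb
      rw [hext (n+1) le_rfl]
      exact hfin.symm

def vsSt : ℕ → ℕ → ℤ
  | 0, 0 => 1
  | 0, _ + 1 => 0
  | _ + 1, 0 => 0
  | m + 1, j + 1 => (j + 1) * vsSt m (j + 1) + vsSt m j

lemma vsN_eq_st : ∀ m j : ℕ, vsN m j = (-1) ^ j * (j.factorial : ℤ) * vsSt m j := by
  intro m
  induction m with
  | zero =>
      intro j
      rw [vsN_zero_left]
      match j with
      | 0 => simp [vsSt]
      | j + 1 => simp [vsSt]
  | succ m ih =>
      intro j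
      match j with
      | 0 => simp [vsSt, vsN_zero_right]
      | j + 1 =>
          rw [vsN_rec, ih j, ih (j+1), vsSt]
          rw [Nat.factorial_succ]
          push_cast
          ring

/-- if `0 < a < b ≤ j` then `a*b ∣ j!`. -/
lemma vs_mul_dvd_factorial {a b j : ℕ} (h0 : 0 < a) (hab : a < b) (hbj : b ≤ j) :
    a * b ∣ j.factorial := by
  have h1 : a ∣ (b - 1).factorial := Nat.dvd_factorial h0 (by omega)
  have h2 : a * b ∣ b.factorial := by
    calc a * b ∣ (b - 1).factorial * b := mul_dvd_mul_right h1 b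
      _ = b.factorial := by
          rw [mul_comm]
          have hb : b = (b - 1) + 1 := by omega
          rw [hb, Nat.factorial_succ]
          congr 1 <;> omega
  exact h2.trans (Nat.factorial_dvd_factorial hbj)

/-- a composite number `n ≠ 4` divides `(n-1)!`. -/
lemma composite_dvd_factorial {n : ℕ} (h2 : 2 ≤ n) (hnp : ¬ n.Prime) (h4 : n ≠ 4) :
    (n : ℤ) ∣ (Nat.factorial (n - 1) : ℤ) := by
  have : n ∣ Nat.factorial (n - 1) := by
    obtain ⟨a, ha, ha2, han⟩ : ∃ a, a ∣ n ∧ 2 ≤ a ∧ a < n :=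
      (Nat.exists_dvd_of_not_prime2 h2 hnp)
    obtain ⟨b, hb⟩ := ha
    have hb2 : 2 ≤ b := by
      rcases b with _ | _ | b
      · omega
      · omega
      · omega
    have hbn : b < n := by nlinarith
    by_cases hab : a = b
    · -- n = a^2, a ≥ 3 since n ≠ 4
      subst hab
      have ha3 : 3 ≤ a := by
        by_contra h
        interval_cases a <;> omega
      have h2a : 2 * a < n := by rw [hb]; nlinarith
      have hdvd1 : a * (2 * a) ∣ (n - 1).factorial :=
        vs_mul_dvd_factorial (by omega) (by omega) (by omega)
      have hsq : a * a ∣ a * (2 * a) := ⟨2, by ring⟩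
      calc n = a * a := hb
        _ ∣ (n - 1).factorial := hsq.trans hdvd1
    · rcases Nat.lt_or_ge a b with hlt | hge
      · calc n = a * b := hb
          _ ∣ (n - 1).factorial := vs_mul_dvd_factorial (by omega) hlt (by omega)
      · have hlt : b < a := by omega
        calc n = b * a := by rw [hb]; ring
          _ ∣ (n - 1).factorial := vs_mul_dvd_factorial (by omega) hlt (by omega)
  exact_mod_cast Int.natCast_dvd_natCast.mpr this

lemma vs_choose_zmod (p : ℕ) [hp : Fact p.Prime] :
    ∀ i ≤ p - 1, (((p-1).choose i : ℕ) : ZMod p) = (-1) ^ i := by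
  intro i
  induction i with
  | zero => intro _; simp
  | succ i ih =>
      intro hi
      have hp2 : 2 ≤ p := hp.out.two_le
      have key := Nat.choose_succ_right_eq (p - 1) i
      have key2 : (((p-1).choose (i+1) : ℕ) : ZMod p) * ((i:ZMod p) + 1)
          = (((p-1).choose i : ℕ) : ZMod p) * (((p - 1 - i : ℕ) : ZMod p)) := by
        exact_mod_cast congrArg (Nat.cast : ℕ → ZMod p) key
      have hsub : ((p - 1 - i : ℕ) : ZMod p) = -1 - i := by
        rw [Nat.cast_sub (by omega), Nat.cast_sub (by omega)]
        simp [ZMod.natCast_self]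
      rw [hsub, ih (by omega)] at key2
      have hne : ((i:ZMod p) + 1) ≠ 0 := by
        have : (((i+1 : ℕ)) : ZMod p) ≠ 0 := by
          rw [Ne, ZMod.natCast_eq_zero_iff]
          intro hdvd
          have := Nat.le_of_dvd (by omega) hdvd
          omega
        push_cast at this
        exact this
      apply mul_right_cancel₀ hne
      rw [key2]
      ring

lemma vs_zmod_sum_pow (p : ℕ) [hp : Fact p.Prime] (k : ℕ) (hk : 0 < k) :
    ∑ i ∈ range p, ((i : ZMod p)) ^ k = if (p - 1) ∣ k then -1 else 0 := by
  classical
  have h1 : ∑ i ∈ range p, ((i : ZMod p)) ^ k = ∑ x : ZMod p, x ^ k := by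
    apply Finset.sum_nbij' (i := fun a => ((a : ℕ) : ZMod p)) (j := fun x => x.val)
    · intro a _; exact Finset.mem_univ _
    · intro x _; exact Finset.mem_range.mpr (ZMod.val_lt x)
    · intro a ha; exact ZMod.val_cast_of_lt (Finset.mem_range.mp ha)
    · intro x _; exact ZMod.natCast_rightInverse x
    · intro a _; rfl
  rw [h1]
  have h2 : ∑ x : ZMod p, x ^ k = ∑ x ∈ Finset.univ.filter (· ≠ (0 : ZMod p)), x ^ k := by
    symm
    apply Finset.sum_filter_of_ne
    intro x _ hx h0
    subst h0
    exact hx (zero_pow (by omega))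
  rw [h2]
  have h3 : ∑ x ∈ Finset.univ.filter (· ≠ (0 : ZMod p)), x ^ k
      = ∑ u : (ZMod p)ˣ, ((u : ZMod p)) ^ k := by
    symm
    refine Finset.sum_nbij' (fun u => (u : ZMod p))
      (fun x => if h : x = (0 : ZMod p) then 1 else Units.mk0 x h) ?_ ?_ ?_ ?_ ?_
    · intro u _
      simp [Units.ne_zero]
    · intro x hx; exact Finset.mem_univ _
    · intro u _
      simp [Units.ne_zero]
    · intro x hx
      simp only [Finset.mem_filter] at hx
      simp [hx.2]
    · intro u _; rfl
  rw [h3]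
  have := FiniteField.sum_pow_units (ZMod p) k
  rw [ZMod.card] at this
  simpa using this

lemma vsN_zmod (p : ℕ) [hp : Fact p.Prime] (k : ℕ) (hk : 0 < k) :
    ((vsN k (p - 1) : ℤ) : ZMod p) = if (p - 1) ∣ k then -1 else 0 := by
  have hp2 : 2 ≤ p := hp.out.two_le
  have hrange : p - 1 + 1 = p := by omega
  have h1 : ((vsN k (p - 1) : ℤ) : ZMod p)
      = ∑ i ∈ range p, ((-1 : ZMod p) ^ i * (((p-1).choose i : ℕ) : ZMod p) * (i : ZMod p) ^ k) := by
    rw [vsN, hrange]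
    push_cast
    rfl
  rw [h1]
  have h2 : ∀ i ∈ range p, (-1 : ZMod p) ^ i * (((p-1).choose i : ℕ) : ZMod p) * (i : ZMod p) ^ k
      = (i : ZMod p) ^ k := by
    intro i hi
    simp only [Finset.mem_range] at hi
    rw [vs_choose_zmod p i (by omega)]
    have hone : (-1 : ZMod p) ^ i * (-1 : ZMod p) ^ i = 1 := by
      rw [← pow_add, ← two_mul, pow_mul]
      norm_num
    rw [hone, one_mul]
  rw [Finset.sum_congr rfl h2, vs_zmod_sum_pow p k hk]

lemma vs_div_int {a : ℤ} {n : ℕ} (hn : 0 < n) (h : (n : ℤ) ∣ a) :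
    ∃ z : ℤ, (a : ℚ) / (n : ℚ) = (z : ℚ) := by
  obtain ⟨z, rfl⟩ := h
  refine ⟨z, ?_⟩
  have hn' : (n : ℚ) ≠ 0 := by positivity
  push_cast
  field_simp

lemma vsN_three (k : ℕ) (hk : 0 < k) (hke : Even k) : (4 : ℤ) ∣ vsN k 3 := by
  obtain ⟨m, rfl⟩ := hke
  have hm : 0 < m := by omega
  have hform : vsN (m + m) 3 = -3 + 3 * 2 ^ (m + m) - 3 ^ (m + m) := by
    rw [vsN, Finset.sum_range_succ, Finset.sum_range_succ, Finset.sum_range_succ,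
      Finset.sum_range_succ, Finset.sum_range_zero]
    norm_num [Nat.choose, zero_pow (by omega : m + m ≠ 0)]
    ring
  have key : ((vsN (m + m) 3 : ℤ) : ZMod 4) = 0 := by
    rw [hform]
    push_cast
    have h2m : m + m = 2 * m := by ring
    rw [h2m, pow_mul, pow_mul]
    have e2 : ((2 : ZMod 4)) ^ 2 = 0 := by decide
    have e3 : ((3 : ZMod 4)) ^ 2 = 1 := by decide
    rw [e2, e3, zero_pow (by omega), one_pow]
    decide
  have := (ZMod.intCast_zmod_eq_zero_iff_dvd _ 4).mp key
  exact_mod_cast this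

lemma vs_term_int (k j : ℕ) (hk : 0 < k) (hke : Even k) :
    ∃ z : ℤ, (vsN k j : ℚ) / (j + 1)
      + (if (j + 1).Prime ∧ j ∣ k then (1 : ℚ) / (j + 1) else 0) = (z : ℚ) := by
  have hcast : ((j : ℚ) + 1) = ((j + 1 : ℕ) : ℚ) := by push_cast; ring
  by_cases hp : (j + 1).Prime
  · haveI : Fact (j + 1).Prime := ⟨hp⟩
    have hzm := vsN_zmod (j + 1) k hk
    simp only [Nat.add_sub_cancel] at hzm
    by_cases hd : j ∣ k
    · rw [if_pos hd] at hzm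
      rw [if_pos (show (j + 1).Prime ∧ j ∣ k from ⟨hp, hd⟩)]
      have hdvd : ((j + 1 : ℕ) : ℤ) ∣ (vsN k j + 1) := by
        rw [← ZMod.intCast_zmod_eq_zero_iff_dvd]
        push_cast
        rw [hzm]
        ring
      obtain ⟨z, hz⟩ := vs_div_int (n := j + 1) (by omega) hdvd
      refine ⟨z, ?_⟩
      rw [hcast, ← add_div, ← hz]
      push_cast
      ring_nf
    · rw [if_neg hd] at hzm
      rw [if_neg (fun hc => hd hc.2), add_zero]
      have hdvd : ((j + 1 : ℕ) : ℤ) ∣ vsN k j := by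
        rw [← ZMod.intCast_zmod_eq_zero_iff_dvd]
        push_cast
        rw [hzm]
      obtain ⟨z, hz⟩ := vs_div_int (n := j + 1) (by omega) hdvd
      exact ⟨z, by rw [hcast, ← hz]⟩
  · rw [if_neg (fun hc => hp hc.1), add_zero]
    by_cases hj0 : j = 0
    · subst hj0
      refine ⟨0, ?_⟩
      rw [vsN_zero_right, zero_pow hk.ne']
      simp
    · by_cases hj3 : j = 3
      · subst hj3
        obtain ⟨z, hz⟩ := vs_div_int (n := 4) (by omega) (vsN_three k hk hke)
        refine ⟨z, ?_⟩
        rw [hcast]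
        exact_mod_cast hz
      · have hdvd1 : ((j + 1 : ℕ) : ℤ) ∣ (j.factorial : ℤ) := by
          have := composite_dvd_factorial (n := j + 1) (by omega) hp (by omega)
          simpa using this
        have hdvd2 : (j.factorial : ℤ) ∣ vsN k j := by
          rw [vsN_eq_st]
          exact ⟨(-1) ^ j * vsSt k j, by ring⟩
        obtain ⟨z, hz⟩ := vs_div_int (n := j + 1) (by omega) (hdvd1.trans hdvd2)
        exact ⟨z, by rw [hcast]; exact hz⟩

lemma vs_exists_int_sum {s : Finset ℕ} (f : ℕ → ℚ)
    (h : ∀ j ∈ s, ∃ z : ℤ, f j = (z : ℚ)) : ∃ z : ℤ, ∑ j ∈ s, f j = (z : ℚ) := by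
  classical
  induction s using Finset.induction_on with
  | empty => exact ⟨0, by simp⟩
  | insert a s' hx ih =>
      obtain ⟨z1, hz1⟩ := h a (Finset.mem_insert_self a s')
      obtain ⟨z2, hz2⟩ := ih (fun j hj => h j (Finset.mem_insert_of_mem hj))
      refine ⟨z1 + z2, ?_⟩
      rw [Finset.sum_insert hx, hz1, hz2]
      push_cast
      ring

/-- von Staudt–Clausen (integrality form): for every even `k > 0`, the number
`B_k + ∑ 1/l`, summed over primes `l` with `(l-1) ∣ k`, is an integer. -/
theorem von_staudt_clausen (k : ℕ) (hk : 0 < k) (hke : Even k) :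
    ∃ z : ℤ,
      bernoulli k +
        ∑ l ∈ (Finset.range (k + 2)).filter (fun l => l.Prime ∧ (l - 1) ∣ k),
          (1 : ℚ) / l = (z : ℚ) := by
  have hsum : ∑ l ∈ (Finset.range (k + 2)).filter (fun l => l.Prime ∧ (l - 1) ∣ k),
        (1 : ℚ) / l
      = ∑ j ∈ range (k + 1), (if (j + 1).Prime ∧ j ∣ k then (1 : ℚ) / ((j : ℚ) + 1) else 0) := by
    rw [Finset.sum_filter]
    rw [Finset.sum_range_succ' (fun l => if l.Prime ∧ (l - 1) ∣ k then (1 : ℚ) / l else 0)]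
    have h0 : (if Nat.Prime 0 ∧ (0 - 1) ∣ k then (1 : ℚ) / ((0 : ℕ) : ℚ) else 0) = 0 := by
      simp [Nat.not_prime_zero]
    rw [h0, add_zero]
    apply Finset.sum_congr rfl
    intro j _
    have : (j + 1) - 1 = j := by omega
    rw [this]
    congr 1
    push_cast
    ring
  rw [bernoulli_eq_vsN k, hsum, ← Finset.sum_add_distrib]
  apply vs_exists_int_sum
  intro j _
  exact vs_term_int k j hk hke
end

section
/- For an integer n > 1, if the identity (T + 1)^n = T^n + 1 holds in the polynomial ring (ℤ/nℤ)[T], then n is prime. -/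
open Polynomial in
/-- If `(T + 1)^n = T^n + 1` in `(ℤ/nℤ)[T]` for some `n > 1`, then `n` is prime. -/
theorem prime_of_freshman_dream (n : ℕ) (hn : 1 < n)
    (h : (X + 1 : Polynomial (ZMod n)) ^ n = X ^ n + 1) : n.Prime := by
  by_contra hnp
  set p := n.minFac with hpdef
  have hp : p.Prime := Nat.minFac_prime (by omega)
  have hpd : p ∣ n := Nat.minFac_dvd n
  have hpn : p < n := by
    rcases lt_or_eq_of_le (Nat.le_of_dvd (by omega) hpd) with h' | h'
    · exact h'
    · exact absurd (h' ▸ hp) hnp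
  -- coefficient at p gives n ∣ choose n p
  have hcoeff := congrArg (fun q : Polynomial (ZMod n) => q.coeff p) h
  simp only [coeff_X_add_one_pow, coeff_add, coeff_X_pow, coeff_one,
    if_neg (Nat.ne_of_lt hpn), if_neg hp.ne_zero] at hcoeff
  haveI : NeZero n := ⟨by omega⟩
  have hdvd : n ∣ n.choose p := (ZMod.natCast_eq_zero_iff _ _).mp (by rw [hcoeff]; ring)
  -- Lucas: p does not divide choose (n-1) (p-1)
  haveI : Fact p.Prime := ⟨hp⟩
  have hlucas := Choose.choose_modEq_choose_mod_mul_choose_div (p := p) (n := n-1) (k := p-1)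
  obtain ⟨k, hk⟩ := hpd
  have hk2 : 2 ≤ k := by nlinarith [hp.two_le]
  have hp2 := hp.two_le
  have hmod : (n - 1) % p = p - 1 := by
    have : n - 1 = (p - 1) + p * (k - 1) := by
      cases k with
      | zero => omega
      | succ m =>
        rw [hk, Nat.mul_succ]
        simp only [Nat.add_sub_cancel]
        omega
    rw [this, Nat.add_mul_mod_self_left, Nat.mod_eq_of_lt (by omega)]
  have hmodp : (p - 1) % p = p - 1 := Nat.mod_eq_of_lt (by omega)
  have hdivp : (p - 1) / p = 0 := Nat.div_eq_of_lt (by omega)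
  rw [hmod, hmodp, Nat.choose_self, hdivp, Nat.choose_zero_right, Nat.cast_one, mul_one] at hlucas
  have hnd : ¬ p ∣ (n - 1).choose (p - 1) := by
    intro hd
    have h0 : ((n - 1).choose (p - 1) : ZMod p) = 0 :=
      (ZMod.natCast_eq_zero_iff _ _).mpr hd
    have h1 : ((n - 1).choose (p - 1) : ZMod p) = 1 := by
      have := (ZMod.intCast_eq_intCast_iff _ _ _).mpr hlucas
      push_cast at this
      exact_mod_cast this
    rw [h0] at h1
    exact zero_ne_one h1
  -- valuation contradiction
  have hkey : p * n.choose p = n * (n - 1).choose (p - 1) := by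
    have := Nat.add_one_mul_choose_eq (n - 1) (p - 1)
    have hps : p - 1 + 1 = p := by omega
    have hns : n - 1 + 1 = n := by omega
    rw [hps, hns] at this
    rw [mul_comm p]
    exact this.symm
  set a := n.factorization p with ha
  have hpa : p ^ a ∣ n := Nat.ordProj_dvd n p
  have hdvd2 : p ^ (a + 1) ∣ p * n.choose p := by
    rw [pow_succ']
    exact mul_dvd_mul_left p (hpa.trans hdvd)
  rw [hkey] at hdvd2
  have hcop : Nat.Coprime (p ^ (a + 1)) ((n - 1).choose (p - 1)) :=
    Nat.Coprime.pow_left _ ((Nat.Prime.coprime_iff_not_dvd hp).mpr hnd)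
  have hfin : p ^ (a + 1) ∣ n := hcop.dvd_of_dvd_mul_right hdvd2
  have := (Nat.Prime.pow_dvd_iff_le_factorization hp (by omega)).mp hfin
  omega
end
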